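/- For the standard normal density f and CDF F, the function x ↦ f(x)/F(x) is strictly decreasing on ℝ, and f(x)/F(x) > −x for all x ∈ ℝ (equivalently, the conditional mean E[Z | Z > t] > t for a standard normal Z and every real t). -/

import Mathlib

open MeasureTheory ProbabilityTheory Set

noncomputable def stdPDF (x : ℝ) : ℝ := (Real.sqrt (2 * Real.pi))⁻¹ * Real.exp (-x ^ 2 / 2)
noncomputable def stdCDF (x : ℝ) : ℝ := ∫ u in Set.Iic x, stdPDF u

lemma stdPDF_pos (x : ℝ) : 0 < stdPDF x := by
  have h : 0 < Real.sqrt (2 * Real.pi) := Real.sqrt_pos.2 (by positivity)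
  exact mul_pos (inv_pos.2 h) (Real.exp_pos _)

lemma stdPDF_continuous : Continuous stdPDF := by
  unfold stdPDF
  fun_prop

lemma stdPDF_integrable : Integrable stdPDF := by
  have h : Integrable (fun x : ℝ => Real.exp (-(1/2 : ℝ) * x ^ 2)) :=
    integrable_exp_neg_mul_sq (by norm_num)
  refine (h.const_mul (Real.sqrt (2 * Real.pi))⁻¹).congr
    (Filter.Eventually.of_forall fun x => ?_)
  simp only [stdPDF]
  rw [show (-x ^ 2 / 2 : ℝ) = -(1/2) * x ^ 2 by ring]

lemma mul_stdPDF_integrable : Integrable (fun x : ℝ => x * stdPDF x) := by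
  have h : Integrable (fun x : ℝ => x * Real.exp (-(1/2 : ℝ) * x ^ 2)) :=
    integrable_mul_exp_neg_mul_sq (by norm_num)
  refine (h.const_mul (Real.sqrt (2 * Real.pi))⁻¹).congr
    (Filter.Eventually.of_forall fun x => ?_)
  simp only [stdPDF]
  rw [show (-x ^ 2 / 2 : ℝ) = -(1/2) * x ^ 2 by ring]
  ring

lemma stdPDF_hasDerivAt (x : ℝ) : HasDerivAt stdPDF (-x * stdPDF x) x := by
  have h1 : HasDerivAt (fun y : ℝ => -y ^ 2 / 2) (-x) x := by
    have : HasDerivAt (fun y : ℝ => -y ^ 2 / 2) (-((2:ℕ) * x ^ (2 - 1)) / 2) x :=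
      ((hasDerivAt_pow 2 x).neg).div_const 2
    convert this using 1
    ring
  have h2 : HasDerivAt (fun y : ℝ => Real.exp (-y ^ 2 / 2))
      (Real.exp (-x ^ 2 / 2) * (-x)) x := (Real.hasDerivAt_exp _).comp x h1
  have h3 := h2.const_mul (Real.sqrt (2 * Real.pi))⁻¹
  have hval : -x * stdPDF x
      = (Real.sqrt (2 * Real.pi))⁻¹ * (Real.exp (-x ^ 2 / 2) * -x) := by
    rw [stdPDF]; ring
  rw [hval]
  exact h3

lemma stdCDF_pos (x : ℝ) : 0 < stdCDF x := by
  unfold stdCDF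
  refine (setIntegral_pos_iff_support_of_nonneg_ae ?_ ?_).2 ?_
  · exact Filter.Eventually.of_forall fun u => (stdPDF_pos u).le
  · exact stdPDF_integrable.integrableOn
  · have h : Function.support stdPDF = Set.univ := by
      ext u; simp [Function.mem_support, (stdPDF_pos u).ne']
    rw [h, Set.univ_inter]
    simp

lemma stdCDF_hasDerivAt (x : ℝ) : HasDerivAt stdCDF (stdPDF x) x := by
  have key : ∀ y : ℝ, stdCDF y = stdCDF 0 + ∫ u in (0:ℝ)..y, stdPDF u := by
    intro y
    have h := intervalIntegral.integral_Iic_sub_Iic (μ := volume) (f := stdPDF)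
      (a := 0) (b := y) stdPDF_integrable.integrableOn stdPDF_integrable.integrableOn
    unfold stdCDF
    unfold stdCDF at h
    linarith
  have hFTC : HasDerivAt (fun y => stdCDF 0 + ∫ u in (0:ℝ)..y, stdPDF u) (stdPDF x) x := by
    have := intervalIntegral.integral_hasDerivAt_right (a := 0) (b := x)
      (stdPDF_integrable.intervalIntegrable)
      (stdPDF_continuous.stronglyMeasurableAtFilter _ _)
      stdPDF_continuous.continuousAt
    exact this.const_add _
  exact hFTC.congr_of_eventuallyEq (Filter.Eventually.of_forall key)

lemma stdPDF_tendsto_atBot : Filter.Tendsto stdPDF Filter.atBot (nhds 0) := by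
  have hsq : Filter.Tendsto (fun x : ℝ => x ^ 2) Filter.atBot Filter.atTop := by
    have h := (Filter.tendsto_pow_atTop (two_ne_zero)).comp
      (Filter.tendsto_neg_atBot_atTop (G := ℝ))
    refine h.congr fun x => ?_
    simp [Function.comp]
  have h1 : Filter.Tendsto (fun x : ℝ => -x ^ 2 / 2) Filter.atBot Filter.atBot := by
    apply Filter.Tendsto.atBot_div_const (by norm_num : (0:ℝ) < 2)
    exact Filter.tendsto_neg_atBot_iff.2 hsq
  have h2 := Real.tendsto_exp_atBot.comp h1
  have h3 := h2.const_mul (Real.sqrt (2 * Real.pi))⁻¹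
  rw [mul_zero] at h3
  exact h3.congr fun x => by rw [stdPDF]; rfl

lemma neg_mul_stdPDF_integrable : Integrable (fun u : ℝ => -u * stdPDF u) := by
  refine mul_stdPDF_integrable.neg.congr (Filter.Eventually.of_forall fun u => ?_)
  simp [neg_mul]

lemma stdPDF_eq_integral (x : ℝ) : stdPDF x = ∫ u in Set.Iic x, -u * stdPDF u := by
  have h := integral_Iic_of_hasDerivAt_of_tendsto' (a := x) (f := stdPDF)
    (f' := fun u => -u * stdPDF u) (m := 0)
    (fun u _ => stdPDF_hasDerivAt u)
    neg_mul_stdPDF_integrable.integrableOn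
    stdPDF_tendsto_atBot
  rw [h, sub_zero]

lemma key_pos (x : ℝ) : 0 < stdPDF x + x * stdCDF x := by
  have hint : Integrable (fun u : ℝ => (x - u) * stdPDF u) := by
    refine ((stdPDF_integrable.const_mul x).sub mul_stdPDF_integrable).congr
      (Filter.Eventually.of_forall fun u => ?_)
    simp only [Pi.sub_apply]
    ring
  have heq : stdPDF x + x * stdCDF x = ∫ u in Set.Iic x, (x - u) * stdPDF u := by
    rw [stdPDF_eq_integral x]
    unfold stdCDF
    rw [← integral_const_mul, ← integral_add
      neg_mul_stdPDF_integrable.integrableOn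
      ((stdPDF_integrable.const_mul x).integrableOn)]
    congr 1; ext u; ring
  rw [heq]
  have hsplit := intervalIntegral.integral_Iic_sub_Iic (μ := volume)
    (f := fun u : ℝ => (x - u) * stdPDF u) (a := x - 1) (b := x)
    hint.integrableOn hint.integrableOn
  have h1 : 0 ≤ ∫ u in Set.Iic (x - 1), (x - u) * stdPDF u := by
    apply setIntegral_nonneg measurableSet_Iic
    intro u hu
    have hu' : u ≤ x - 1 := hu
    exact mul_nonneg (by linarith) (stdPDF_pos u).le
  have h2 : 0 < ∫ u in (x-1)..x, (x - u) * stdPDF u := by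
    apply intervalIntegral.intervalIntegral_pos_of_pos_on hint.intervalIntegrable
    · intro u hu
      rw [Set.mem_Ioo] at hu
      exact mul_pos (by linarith [hu.2]) (stdPDF_pos u)
    · linarith
  linarith

lemma div_hasDerivAt (x : ℝ) :
    HasDerivAt (fun y : ℝ => stdPDF y / stdCDF y)
      ((-x * stdPDF x * stdCDF x - stdPDF x * stdPDF x) / (stdCDF x) ^ 2) x :=
  (stdPDF_hasDerivAt x).div (stdCDF_hasDerivAt x) (stdCDF_pos x).ne'

theorem stmt13 :
    StrictAnti (fun x : ℝ => stdPDF x / stdCDF x) ∧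
    (∀ x : ℝ, -x < stdPDF x / stdCDF x) := by
  constructor
  · apply strictAnti_of_deriv_neg
    intro x
    rw [(div_hasDerivAt x).deriv]
    apply div_neg_of_neg_of_pos
    · nlinarith [stdPDF_pos x, key_pos x, mul_pos (stdPDF_pos x) (key_pos x)]
    · exact pow_pos (stdCDF_pos x) 2
  · intro x
    rw [lt_div_iff₀ (stdCDF_pos x)]
    nlinarith [key_pos x, stdCDF_pos x]
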